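/- Let u > 0, u ≠ 1. Define d0 : ℝ^2 → ℝ^9 with rows (−1,0),(0,0),(0,0),(0,0),(−(1+u^2)/(2u),0),(0,(−1+u^2)/(2u)),(1/(2u),0),(−u/2,0),(1/2,0), and the 7×9 matrix d1 = [[−1,0,0,0,(1+u^2)/(2u),0,1/(2u),−u/2,−1],[1,0,0,0,0,0,0,0,2],[0,1,0,0,0,0,0,0,0],[0,0,1,0,0,0,0,0,0],[0,0,0,1,0,0,0,0,0],[0,0,0,0,−1/2,0,0,0,−(1+u^2)/(2u)],[0,0,0,0,−1/2,0,−1/2,1/2,0]]. Then d1 ∘ d0 = 0, d0 is injective, ker d1 = im d0, and d1 is surjective. -/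

import Mathlib

set_option maxHeartbeats 1000000 in
theorem stmt10 (u : ℝ) (hu : 0 < u) (hu1 : u ≠ 1) :
    let d0 : (Fin 2 → ℝ) →ₗ[ℝ] (Fin 9 → ℝ) :=
      Matrix.mulVecLin
        (!![-1,0; 0,0; 0,0; 0,0; -(1+u^2)/(2*u),0; 0,(-1+u^2)/(2*u);
            1/(2*u),0; -u/2,0; 1/2,0])
    let d1 : (Fin 9 → ℝ) →ₗ[ℝ] (Fin 7 → ℝ) :=
      Matrix.mulVecLin
        (!![-1,0,0,0,(1+u^2)/(2*u),0,1/(2*u),-u/2,-1;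
            1,0,0,0,0,0,0,0,2;
            0,1,0,0,0,0,0,0,0;
            0,0,1,0,0,0,0,0,0;
            0,0,0,1,0,0,0,0,0;
            0,0,0,0,-1/2,0,0,0,-(1+u^2)/(2*u);
            0,0,0,0,-1/2,0,-1/2,1/2,0])
    d1 ∘ₗ d0 = 0 ∧
    Function.Injective d0 ∧
    LinearMap.ker d1 = LinearMap.range d0 ∧
    Function.Surjective d1 := by
  intro d0 d1
  have hu0 : u ≠ 0 := ne_of_gt hu
  have hue : (-1 + u ^ 2) ≠ 0 := by
    rcases lt_or_gt_of_ne hu1 with h | h <;> nlinarith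
  have h1u : (1 : ℝ) - u ^ 2 ≠ 0 := by intro h; apply hue; linarith
  have hcomp : d1 ∘ₗ d0 = 0 := by
    apply LinearMap.ext
    intro v
    show d1 (d0 v) = 0
    simp only [d0, d1]
    simp [Matrix.mulVecLin_apply, Matrix.mulVec, dotProduct, Fin.sum_univ_succ,
      funext_iff, Fin.forall_fin_succ, Fin.succ]
    refine ⟨?_, ?_, ?_, ?_⟩ <;> field_simp <;> ring
  have hinj : Function.Injective d0 := by
    rw [← LinearMap.ker_eq_bot, eq_bot_iff]
    intro x hx
    simp only [LinearMap.mem_ker, d0, Matrix.mulVecLin_apply] at hx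
    simp [Matrix.mulVec, dotProduct, Fin.sum_univ_succ, funext_iff,
      Fin.forall_fin_succ, Fin.succ] at hx
    obtain ⟨hd, -, hb, -, -⟩ := hx
    have hx1 : x 1 = 0 := by
      rcases hb with (h | h) | h
      · exact absurd h hue
      · exact absurd h hu0
      · exact h
    simp only [Submodule.mem_bot]
    funext j
    fin_cases j
    · simpa using hd
    · simpa using hx1
  refine ⟨hcomp, hinj, ?_, ?_⟩
  · -- ker d1 = range d0
    apply le_antisymm
    · intro x hx
      simp only [LinearMap.mem_ker, d1, Matrix.mulVecLin_apply] at hx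
      simp [Matrix.mulVec, dotProduct, Fin.sum_univ_succ, funext_iff,
        Fin.forall_fin_succ, Fin.succ] at hx
      obtain ⟨h0, h1, h2, h3, h4, h5, h6⟩ := hx
      field_simp at h0 h5 h6
      have key : (u ^ 2 - 1) * (x 8 - u * x 6) = 0 := by
        linear_combination u*h0 + 2*u^2*h1 + u^3*h6 + h5
      have hx6 : x 8 = u * x 6 := by
        rcases mul_eq_zero.mp key with h | h
        · exact absurd (by linarith : (-1:ℝ) + u ^ 2 = 0) hue
        · linarith
      have hx4 : x 4 = -(u ^ 2 + 1) * x 6 := by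
        have h' : u * x 4 = u * (-(u ^ 2 + 1) * x 6) := by
          linear_combination -h5 - (u^2+1)*hx6
        exact mul_left_cancel₀ hu0 h'
      have hx7 : x 7 = -u ^ 2 * x 6 := by linear_combination h6 + hx4
      refine ⟨![2 * x 8, 2 * u * x 5 / (-1 + u ^ 2)], ?_⟩
      show Matrix.mulVecLin _ _ = x
      simp [Matrix.mulVec, dotProduct, Fin.sum_univ_succ, funext_iff,
        Fin.forall_fin_succ, Fin.succ]
      refine ⟨by linear_combination -h1, h2.symm, h3.symm, h4.symm,
        by field_simp; linear_combination h5, by field_simp,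
        by field_simp; linear_combination hx6, by linear_combination -u*hx6 - hx7, by ring⟩
    · rw [LinearMap.range_le_iff_comap, eq_top_iff]
      intro v _
      simp only [Submodule.mem_comap, LinearMap.mem_ker, ← LinearMap.comp_apply, hcomp]
      simp
  · -- surjective
    intro y
    refine ⟨![y 1, y 2, y 3, y 4, -2 * y 5, 0,
        (2*u/(1-u^2))*(y 0 + y 1 + y 5/u + u * y 6),
        2 * y 6 - 2 * y 5 + (2*u/(1-u^2))*(y 0 + y 1 + y 5/u + u * y 6), 0], ?_⟩
    show Matrix.mulVecLin _ _ = y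
    simp [Matrix.mulVec, dotProduct, Fin.sum_univ_succ, funext_iff,
      Fin.forall_fin_succ, Fin.succ]
    refine ⟨?_, by ring, by ring⟩
    field_simp
    ring
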